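/- arXiv:2511.17834 — 4 statements merged into one kernel-verified Lean document; each statement's English description precedes it below -/
import Mathlib

section
/- Let L > 0, let d ≥ 1, and let I be a finite index set. For each k ∈ I let x_k, g_k ∈ ℝ^d and f_k ∈ ℝ. Then there exists an L-smooth convex function f : ℝ^d → ℝ with f(x_k) = f_k and ∇f(x_k) = g_k for every k ∈ I if and only if for every pair i, j ∈ I one has f_j − f_i + ⟨g_j, x_i − x_j⟩ + (1/(2L)) ‖g_i − g_j‖² ≤ 0. -/
open RealInnerProductSpace Filter Topology

section SCIA
variable {E : Type*} [NormedAddCommGroup E] [InnerProductSpace ℝ E] [CompleteSpace E]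

theorem scia_hasDerivAt_line (f : E → ℝ) (hdf : Differentiable ℝ f) (z v : E) (t₀ : ℝ) :
    HasDerivAt (fun t : ℝ => f (z + t • v)) ⟪gradient f (z + t₀ • v), v⟫ t₀ := by
  have h1 : HasDerivAt (fun t : ℝ => z + t • v) v t₀ := by
    simpa using ((hasDerivAt_id t₀).smul_const v).const_add z
  have h2 := (hdf (z + t₀ • v)).hasGradientAt
  rw [hasGradientAt_iff_hasFDerivAt] at h2
  have h3 := h2.comp_hasDerivAt t₀ h1
  simp only [InnerProductSpace.toDual_apply_apply] at h3
  exact h3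

theorem scia_descent {f : E → ℝ} {L : ℝ} (hL : 0 < L) (hdf : Differentiable ℝ f)
    (hlip : ∀ u v : E, ‖gradient f u - gradient f v‖ ≤ L * ‖u - v‖) (x y : E) :
    f y ≤ f x + ⟪gradient f x, y - x⟫ + L / 2 * ‖y - x‖ ^ 2 := by
  set v := y - x with hv
  have hcg : Continuous (gradient f) := by
    have : LipschitzWith (Real.toNNReal L) (gradient f) := by
      apply LipschitzWith.of_dist_le_mul
      intro u w
      rw [dist_eq_norm, dist_eq_norm]
      simpa [Real.coe_toNNReal L hL.le] using hlip u w
    exact this.continuous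
  have hψ : ∀ t : ℝ, HasDerivAt (fun t : ℝ => f (x + t • v))
      ⟪gradient f (x + t • v), v⟫ t := fun t => scia_hasDerivAt_line f hdf x v t
  have hcont : Continuous fun t : ℝ => ⟪gradient f (x + t • v), v⟫ := by
    exact (Continuous.inner (hcg.comp (by continuity)) continuous_const)
  have hftc : f (x + (1:ℝ) • v) - f (x + (0:ℝ) • v)
      = ∫ t in (0:ℝ)..1, ⟪gradient f (x + t • v), v⟫ := by
    rw [intervalIntegral.integral_eq_sub_of_hasDerivAt (fun t _ => hψ t)
      (hcont.intervalIntegrable 0 1)]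
  have hbound : ∀ t ∈ Set.Icc (0:ℝ) 1, ⟪gradient f (x + t • v), v⟫
      ≤ ⟪gradient f x, v⟫ + L * t * ‖v‖ ^ 2 := by
    intro t ht
    have h1 : ⟪gradient f (x + t • v), v⟫ - ⟪gradient f x, v⟫
        = ⟪gradient f (x + t • v) - gradient f x, v⟫ := by
      rw [inner_sub_left]
    have h2 : ⟪gradient f (x + t • v) - gradient f x, v⟫ ≤ L * t * ‖v‖ ^ 2 := by
      calc ⟪gradient f (x + t • v) - gradient f x, v⟫
          ≤ ‖gradient f (x + t • v) - gradient f x‖ * ‖v‖ := real_inner_le_norm _ _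
        _ ≤ (L * ‖(x + t • v) - x‖) * ‖v‖ := by
            have := hlip (x + t • v) x
            nlinarith [norm_nonneg v]
        _ = L * t * ‖v‖ ^ 2 := by
            rw [add_sub_cancel_left, norm_smul, Real.norm_eq_abs, abs_of_nonneg ht.1]
            ring
    linarith
  have hint : (∫ t in (0:ℝ)..1, ⟪gradient f (x + t • v), v⟫)
      ≤ ∫ t in (0:ℝ)..1, (⟪gradient f x, v⟫ + L * t * ‖v‖ ^ 2) := by
    apply intervalIntegral.integral_mono_on (by norm_num)
      (hcont.intervalIntegrable 0 1)
      (((by continuity : Continuous fun t : ℝ => ⟪gradient f x, v⟫ + L * t * ‖v‖ ^ 2)).intervalIntegrable 0 1)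
    exact hbound
  have hcalc : (∫ t in (0:ℝ)..1, (⟪gradient f x, v⟫ + L * t * ‖v‖ ^ 2))
      = ⟪gradient f x, v⟫ + L / 2 * ‖v‖ ^ 2 := by
    rw [intervalIntegral.integral_add (intervalIntegrable_const)
      (((by continuity : Continuous fun t : ℝ => L * t * ‖v‖ ^ 2)).intervalIntegrable 0 1)]
    simp only [intervalIntegral.integral_const]
    have : (∫ t in (0:ℝ)..1, L * t * ‖v‖ ^ 2) = L / 2 * ‖v‖ ^ 2 := by
      have : (fun t : ℝ => L * t * ‖v‖ ^ 2) = fun t : ℝ => (L * ‖v‖ ^ 2) * t := by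
        funext t; ring
      rw [this, intervalIntegral.integral_const_mul, integral_id]
      ring
    rw [this]; simp
  have h0 : x + (0:ℝ) • v = x := by simp
  have h1 : x + (1:ℝ) • v = y := by simp [hv]
  rw [h0, h1] at hftc
  linarith [hftc, hint.trans_eq hcalc]

theorem scia_convex_lower {f : E → ℝ} (hc : ConvexOn ℝ Set.univ f)
    (hdf : Differentiable ℝ f) (x y : E) :
    f x + ⟪gradient f x, y - x⟫ ≤ f y := by
  set v := y - x with hv
  have hψ : HasDerivAt (fun t : ℝ => f (x + t • v)) ⟪gradient f x, v⟫ 0 := by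
    simpa using scia_hasDerivAt_line f hdf x v 0
  have hslope : Filter.Tendsto (slope (fun t : ℝ => f (x + t • v)) 0) (𝓝[>] 0)
      (𝓝 ⟪gradient f x, v⟫) :=
    ((hasDerivAt_iff_tendsto_slope.mp hψ).mono_left
      (nhdsWithin_mono 0 (by intro t ht; exact ne_of_gt ht)))
  have hle : ∀ᶠ t in 𝓝[>] (0:ℝ), slope (fun t : ℝ => f (x + t • v)) 0 t ≤ f y - f x := by
    filter_upwards [Ioo_mem_nhdsGT_of_mem (by norm_num : (0:ℝ) ∈ Set.Ico 0 1)] with t ht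
    have hxy : x + t • v = (1 - t) • x + t • y := by
      rw [hv]; module
    have hcc := hc.2 (Set.mem_univ x) (Set.mem_univ y) (by linarith [ht.2] : (0:ℝ) ≤ 1 - t)
      ht.1.le (by ring)
    rw [← hxy] at hcc
    rw [slope_def_field]
    simp only [smul_eq_mul, sub_zero, zero_smul, add_zero] at *
    rw [div_le_iff₀ ht.1]
    nlinarith [ht.1]
  linarith [le_of_tendsto hslope hle]

theorem scia_forward {f : E → ℝ} {L : ℝ} (hL : 0 < L)
    (hc : ConvexOn ℝ Set.univ f) (hdf : Differentiable ℝ f)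
    (hlip : ∀ u v : E, ‖gradient f u - gradient f v‖ ≤ L * ‖u - v‖) (a b : E) :
    f a - f b + ⟪gradient f a, b - a⟫ + 1 / (2 * L) * ‖gradient f b - gradient f a‖ ^ 2 ≤ 0 := by
  set c := gradient f a with hc_def
  set φ : E → ℝ := fun z => f z - ⟪c, z⟫ with hφ_def
  have hφgrad : ∀ z, HasGradientAt φ (gradient f z - c) z := by
    intro z
    rw [hasGradientAt_iff_hasFDerivAt]
    have h1 : HasFDerivAt f (InnerProductSpace.toDual ℝ E (gradient f z)) z := by
      have := (hdf z).hasGradientAt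
      rwa [hasGradientAt_iff_hasFDerivAt] at this
    have h2 : HasFDerivAt (fun w : E => ⟪c, w⟫) (InnerProductSpace.toDual ℝ E c) z :=
      (InnerProductSpace.toDual ℝ E c).hasFDerivAt
    have := h1.sub h2
    rwa [← map_sub] at this
  have hφg : ∀ z, gradient φ z = gradient f z - c := fun z => (hφgrad z).gradient
  have hφd : Differentiable ℝ φ := fun z => (hφgrad z).differentiableAt
  have hφlip : ∀ u v : E, ‖gradient φ u - gradient φ v‖ ≤ L * ‖u - v‖ := by
    intro u v
    rw [hφg, hφg, sub_sub_sub_cancel_right]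
    exact hlip u v
  have hφconv : ConvexOn ℝ Set.univ φ := by
    refine ⟨convex_univ, fun u _ w _ s t hs ht hst => ?_⟩
    have := hc.2 (Set.mem_univ u) (Set.mem_univ w) hs ht hst
    simp only [smul_eq_mul] at this
    simp only [hφ_def, inner_add_right, real_inner_smul_right, smul_eq_mul]
    linarith
  have hmin : ∀ z, φ a ≤ φ z := by
    intro z
    have := scia_convex_lower hφconv hφd a z
    rw [hφg] at this
    simp only [hc_def, sub_self, inner_zero_left, add_zero] at this
    exact this
  set w : E := gradient f b - c with hw
  set z₀ : E := b + (-(L⁻¹)) • w with hz₀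
  have hdesc := scia_descent hL hφd hφlip b z₀
  have h1 : z₀ - b = (-(L⁻¹)) • w := by rw [hz₀]; abel
  have h2 : ⟪gradient φ b, z₀ - b⟫ = -(L⁻¹) * ‖w‖ ^ 2 := by
    rw [hφg, ← hw, h1, real_inner_smul_right, real_inner_self_eq_norm_sq]
  have h3 : ‖z₀ - b‖ ^ 2 = L⁻¹ ^ 2 * ‖w‖ ^ 2 := by
    rw [h1, norm_smul, Real.norm_eq_abs, abs_neg, abs_of_nonneg (by positivity : (0:ℝ) ≤ L⁻¹)]
    ring
  have key : φ a ≤ φ b - 1 / (2 * L) * ‖w‖ ^ 2 := by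
    have := (hmin z₀).trans hdesc
    rw [h2, h3] at this
    have heq : φ b + -(L⁻¹) * ‖w‖ ^ 2 + L / 2 * (L⁻¹ ^ 2 * ‖w‖ ^ 2)
        = φ b - 1 / (2 * L) * ‖w‖ ^ 2 := by
      field_simp
      ring
    linarith [heq ▸ this]
  simp only [hφ_def] at key
  rw [inner_sub_right]
  simp only [hw, hc_def] at *
  linarith

end SCIA

section Backward
variable {E : Type*} [NormedAddCommGroup E] [InnerProductSpace ℝ E] [FiniteDimensional ℝ E]
variable {ι : Type*} [Fintype ι] [Nonempty ι]

set_option maxHeartbeats 2000000 in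
theorem scia_backward {L : ℝ} (hL : 0 < L) (x g : ι → E) (fv : ι → ℝ)
    (hij : ∀ i j, fv j - fv i + ⟪g j, x i - x j⟫ + 1 / (2 * L) * ‖g i - g j‖ ^ 2 ≤ 0) :
    ∃ f : E → ℝ, ConvexOn ℝ Set.univ f ∧ Differentiable ℝ f ∧
      (∀ u v : E, ‖gradient f u - gradient f v‖ ≤ L * ‖u - v‖) ∧
      (∀ k, f (x k) = fv k) ∧ (∀ k, gradient f (x k) = g k) := by
  classical
  set y : ι → E := fun k => x k - L⁻¹ • g k with hy_def
  set c : ι → ℝ := fun k => fv k - 1 / (2 * L) * ‖g k‖ ^ 2 with hc_def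
  set h : E → ℝ := fun w => Finset.univ.sup' Finset.univ_nonempty (fun j => c j + ⟪g j, w - y j⟫)
    with hh_def
  have hh_ge : ∀ (j : ι) (w : E), c j + ⟪g j, w - y j⟫ ≤ h w := by
    intro j w
    exact Finset.le_sup' (fun j => c j + ⟪g j, w - y j⟫) (Finset.mem_univ j)
  have hh_le : ∀ (w : E) (b : ℝ), (∀ j, c j + ⟪g j, w - y j⟫ ≤ b) → h w ≤ b := by
    intro w b hb
    exact Finset.sup'_le _ _ fun j _ => hb j
  have hh_cont : Continuous h := by
    rw [continuous_iff_continuousAt]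
    intro w
    apply ContinuousAt.finset_sup'_apply
    intro j _
    exact ((continuous_const.add ((continuous_const.inner
      (continuous_id.sub continuous_const))))).continuousAt
  have hh_cvx : ∀ (u v : E) (s t : ℝ), 0 ≤ s → 0 ≤ t → s + t = 1 →
      h (s • u + t • v) ≤ s * h u + t * h v := by
    intro u v s t hs ht hst
    apply hh_le
    intro j
    have hsplit : s • u + t • v - y j = s • (u - y j) + t • (v - y j) := by
      have h1 : s • (u - y j) + t • (v - y j) = s • u + t • v - (s + t) • y j := by
        module
      rw [h1, hst, one_smul]
    rw [hsplit, inner_add_right, real_inner_smul_right, real_inner_smul_right]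
    have h1 := hh_ge j u
    have h2 := hh_ge j v
    have e : c j + (s * ⟪g j, u - y j⟫ + t * ⟪g j, v - y j⟫)
        = s * (c j + ⟪g j, u - y j⟫) + t * (c j + ⟪g j, v - y j⟫) := by
      linear_combination (-(c j)) * hst
    rw [e]
    exact add_le_add (mul_le_mul_of_nonneg_left h1 hs) (mul_le_mul_of_nonneg_left h2 ht)
  set φ : E → E → ℝ := fun a w => h w + L / 2 * ‖a - w‖ ^ 2 with hφ_def
  have hφcont : ∀ a, Continuous (φ a) := by
    intro a
    exact hh_cont.add (continuous_const.mul (((continuous_const.sub continuous_id).norm).pow 2))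
  -- existence of minimizers
  clear_value y c h φ
  have hexists : ∀ a : E, ∃ p : E, ∀ w : E, φ a p ≤ φ a w := by
    intro a
    obtain ⟨j₀⟩ := ‹Nonempty ι›
    have hlow : ∀ w : E,
        (c j₀ - ‖g j₀‖ * ‖y j₀‖ - L / 2 * ‖a‖ ^ 2) + L / 4 * ‖w‖ ^ 2 - ‖g j₀‖ * ‖w‖
          ≤ φ a w := by
      intro w
      have h1 : c j₀ + ⟪g j₀, w - y j₀⟫ ≤ h w := hh_ge j₀ w
      have h2 : -(‖g j₀‖ * ‖w‖) - ‖g j₀‖ * ‖y j₀‖ ≤ ⟪g j₀, w - y j₀⟫ := by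
        have hc1 := real_inner_le_norm (g j₀) (y j₀ - w)
        have hn : ‖y j₀ - w‖ ≤ ‖w‖ + ‖y j₀‖ := by
          calc ‖y j₀ - w‖ ≤ ‖y j₀‖ + ‖w‖ := norm_sub_le _ _
            _ = ‖w‖ + ‖y j₀‖ := by ring
        have hswap : ⟪g j₀, y j₀ - w⟫ = -⟪g j₀, w - y j₀⟫ := by
          rw [← inner_neg_right, neg_sub]
        rw [hswap] at hc1
        nlinarith [norm_nonneg (g j₀)]
      have h3 : L / 4 * ‖w‖ ^ 2 - L / 2 * ‖a‖ ^ 2 ≤ L / 2 * ‖a - w‖ ^ 2 := by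
        have hn : ‖w‖ ≤ ‖a - w‖ + ‖a‖ := by
          calc ‖w‖ = ‖a - (a - w)‖ := by congr 1; abel
            _ ≤ ‖a‖ + ‖a - w‖ := norm_sub_le _ _
            _ = ‖a - w‖ + ‖a‖ := by ring
        have hsq : ‖w‖ ^ 2 ≤ 2 * ‖a - w‖ ^ 2 + 2 * ‖a‖ ^ 2 := by
          nlinarith [sq_nonneg (‖a - w‖ - ‖a‖), norm_nonneg w, norm_nonneg (a - w),
            norm_nonneg a]
        nlinarith [mul_le_mul_of_nonneg_left hsq (by positivity : (0:ℝ) ≤ L / 4)]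
      simp only [hφ_def]
      nlinarith [h1, h2, h3]
    have htend : Tendsto (fun w : E =>
        (c j₀ - ‖g j₀‖ * ‖y j₀‖ - L / 2 * ‖a‖ ^ 2) + L / 4 * ‖w‖ ^ 2 - ‖g j₀‖ * ‖w‖)
        (cocompact E) atTop := by
      have t0 : Tendsto (fun r : ℝ =>
          (c j₀ - ‖g j₀‖ * ‖y j₀‖ - L / 2 * ‖a‖ ^ 2) + L / 4 * r ^ 2 - ‖g j₀‖ * r)
          atTop atTop := by
        have heq : (fun r : ℝ =>
            (c j₀ - ‖g j₀‖ * ‖y j₀‖ - L / 2 * ‖a‖ ^ 2) + L / 4 * r ^ 2 - ‖g j₀‖ * r)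
            = fun r : ℝ => r * (L / 4 * r - ‖g j₀‖)
              + (c j₀ - ‖g j₀‖ * ‖y j₀‖ - L / 2 * ‖a‖ ^ 2) := by funext r; ring
        rw [heq]
        apply tendsto_atTop_add_const_right
        apply Tendsto.atTop_mul_atTop₀ tendsto_id
        apply tendsto_atTop_add_const_right
        exact Tendsto.const_mul_atTop (by positivity) tendsto_id
      exact t0.comp tendsto_norm_cocompact_atTop
    have hev : ∀ᶠ w in cocompact E, φ a (y j₀) ≤ φ a w := by
      filter_upwards [htend.eventually (eventually_ge_atTop (φ a (y j₀)))] with w hw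
      exact hw.trans (hlow w)
    exact (hφcont a).exists_forall_le' (y j₀) hev
  choose p hp using hexists
  -- subgradient inequality at the proximal point
  have hsub : ∀ (a w : E), h (p a) + L * ⟪a - p a, w - p a⟫ ≤ h w := by
    intro a w
    have key : ∀ t : ℝ, t ∈ Set.Ioc (0:ℝ) 1 →
        h (p a) + L * ⟪a - p a, w - p a⟫ ≤ h w + L / 2 * t * ‖w - p a‖ ^ 2 := by
      intro t ht
      set wt : E := p a + t • (w - p a) with hwt
      have hcomb : wt = (1 - t) • p a + t • w := by
        rw [hwt, smul_sub, sub_smul, one_smul]; abel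
      have h1 : φ a (p a) ≤ φ a wt := hp a wt
      have h2 : h wt ≤ (1 - t) * h (p a) + t * h w := by
        rw [hcomb]
        exact hh_cvx _ _ _ _ (by linarith [ht.2]) ht.1.le (by ring)
      have h3 : ‖a - wt‖ ^ 2 = ‖a - p a‖ ^ 2 - 2 * (t * ⟪a - p a, w - p a⟫)
          + t ^ 2 * ‖w - p a‖ ^ 2 := by
        have : a - wt = (a - p a) - t • (w - p a) := by rw [hwt]; abel
        rw [this, norm_sub_sq_real, real_inner_smul_right, norm_smul, Real.norm_eq_abs,
          mul_pow, sq_abs]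
      simp only [hφ_def] at h1
      rw [h3] at h1
      have ht0 := ht.1
      nlinarith [h1, h2]
    have htlim : Tendsto (fun t : ℝ => h w + L / 2 * t * ‖w - p a‖ ^ 2) (𝓝[>] 0)
        (𝓝 (h w)) := by
      have hcont2 : Continuous fun t : ℝ => h w + L / 2 * t * ‖w - p a‖ ^ 2 :=
        continuous_const.add ((continuous_const.mul continuous_id).mul continuous_const)
      have h0 := hcont2.tendsto 0
      simp only [mul_zero, zero_mul, add_zero] at h0
      exact h0.mono_left nhdsWithin_le_nhds
    refine ge_of_tendsto htlim ?_
    filter_upwards [Ioc_mem_nhdsGT_of_mem (by norm_num : (0:ℝ) ∈ Set.Ico 0 1)] with t ht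
    exact key t ht
  -- monotonicity / nonexpansiveness
  have hmono : ∀ a b : E, 0 ≤ ⟪(a - b) - (p a - p b), p a - p b⟫ := by
    intro a b
    have h1 := hsub a (p b)
    have h2 := hsub b (p a)
    have he : (a - b) - (p a - p b) = (a - p a) - (b - p b) := by abel
    rw [he]
    have hi : ⟪(a - p a) - (b - p b), p a - p b⟫
        = ⟪a - p a, p a - p b⟫ - ⟪b - p b, p a - p b⟫ := by rw [inner_sub_left]
    have hj : ⟪a - p a, p b - p a⟫ = -⟪a - p a, p a - p b⟫ := by
      rw [← inner_neg_right, neg_sub]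
    have hk : ⟪b - p b, p a - p b⟫ = ⟪b - p b, p a - p b⟫ := rfl
    nlinarith [h1, h2, hj]
  have hnonexp : ∀ a b : E, ‖(a - p a) - (b - p b)‖ ≤ ‖a - b‖ := by
    intro a b
    have h0 := hmono a b
    have he : (a - b) - (p a - p b) = (a - p a) - (b - p b) := by abel
    set q : E := p a - p b with hq
    have h1 : ‖(a - b) - q‖ ^ 2 = ‖a - b‖ ^ 2 - 2 * ⟪a - b, q⟫ + ‖q‖ ^ 2 :=
      norm_sub_sq_real _ _
    have h2 : ⟪(a - b) - q, q⟫ = ⟪a - b, q⟫ - ‖q‖ ^ 2 := by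
      rw [inner_sub_left, real_inner_self_eq_norm_sq]
    rw [← he]
    nlinarith [norm_nonneg ((a - b) - q), norm_nonneg (a - b), h0, h1, h2]
  have hpnonexp : ∀ a b : E, ‖p a - p b‖ ≤ ‖a - b‖ := by
    intro a b
    have h0 := hmono a b
    set q : E := p a - p b with hq
    have h2 : ⟪(a - b) - q, q⟫ = ⟪a - b, q⟫ - ‖q‖ ^ 2 := by
      rw [inner_sub_left, real_inner_self_eq_norm_sq]
    have h3 : ⟪a - b, q⟫ ≤ ‖a - b‖ * ‖q‖ := real_inner_le_norm _ _
    nlinarith [norm_nonneg q, norm_nonneg (a - b)]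
  set f : E → ℝ := fun a => φ a (p a) with hf_def
  clear_value f
  -- two-point upper bound
  have hupper : ∀ a b : E, f b ≤ f a + L * ⟪a - p a, b - a⟫ + L / 2 * ‖b - a‖ ^ 2 := by
    intro a b
    have h1 : f b ≤ φ b (p a) := by simp only [hf_def]; exact hp b (p a)
    have h2 : ‖b - p a‖ ^ 2 = ‖a - p a‖ ^ 2 + 2 * ⟪a - p a, b - a⟫ + ‖b - a‖ ^ 2 := by
      have : b - p a = (a - p a) + (b - a) := by abel
      rw [this, norm_add_sq_real]
    simp only [hφ_def, hf_def] at h1 ⊢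
    rw [h2] at h1
    nlinarith [h1]
  -- gradient
  have hgrad : ∀ a : E, HasGradientAt f (L • (a - p a)) a := by
    intro a
    rw [hasGradientAt_iff_hasFDerivAt]
    rw [hasFDerivAt_iff_isLittleO_nhds_zero]
    rw [Asymptotics.isLittleO_iff]
    intro ε hε
    have hball : Metric.ball (0:E) (2 * ε / (3 * L)) ∈ 𝓝 (0:E) :=
      Metric.ball_mem_nhds _ (by positivity)
    filter_upwards [hball] with v hv
    rw [Metric.mem_ball, dist_zero_right] at hv
    set b : E := a + v with hb
    have hba : b - a = v := by rw [hb]; abel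
    have hup : f b - f a - L * ⟪a - p a, v⟫ ≤ 3 * L / 2 * ‖v‖ ^ 2 := by
      have := hupper a b
      rw [hba] at this
      nlinarith [this, norm_nonneg v, sq_nonneg ‖v‖]
    have hlo : -(3 * L / 2) * ‖v‖ ^ 2 ≤ f b - f a - L * ⟪a - p a, v⟫ := by
      have h1 := hupper b a
      have hab : a - b = -v := by rw [hb]; abel
      rw [hab] at h1
      have h2 : ⟪b - p b, -v⟫ = -⟪b - p b, v⟫ := by rw [inner_neg_right]
      rw [h2] at h1
      have h3 : ⟪b - p b, v⟫ - ⟪a - p a, v⟫ = ⟪(b - p b) - (a - p a), v⟫ :=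
        (inner_sub_left _ _ _).symm
      have h4 : ⟪(b - p b) - (a - p a), v⟫ ≥ -(‖(b - p b) - (a - p a)‖ * ‖v‖) := by
        have := real_inner_le_norm ((a - p a) - (b - p b)) v
        have hs : ⟪(a - p a) - (b - p b), v⟫ = -⟪(b - p b) - (a - p a), v⟫ := by
          rw [← inner_neg_left]; congr 1; abel
        have hn : ‖(a - p a) - (b - p b)‖ = ‖(b - p b) - (a - p a)‖ := by
          rw [← norm_neg]; congr 1; abel
        rw [hs, hn] at this
        linarith
      have h5 : ‖(b - p b) - (a - p a)‖ ≤ ‖v‖ := by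
        have := hnonexp b a
        have : ‖(b - p b) - (a - p a)‖ ≤ ‖b - a‖ := hnonexp b a
        rwa [hba] at this
      have h6 : ‖(b - p b) - (a - p a)‖ * ‖v‖ ≤ ‖v‖ ^ 2 := by
        nlinarith [norm_nonneg v]
      have hnv : ‖-v‖ = ‖v‖ := norm_neg v
      rw [hnv] at h1
      nlinarith [h1]
    have habs : |f b - f a - L * ⟪a - p a, v⟫| ≤ 3 * L / 2 * ‖v‖ ^ 2 := by
      rw [abs_le]; constructor <;> nlinarith [hup, hlo]
    have hfinal : 3 * L / 2 * ‖v‖ ^ 2 ≤ ε * ‖v‖ := by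
      rcases eq_or_lt_of_le (norm_nonneg v) with h | h
      · rw [← h]; simp
      · have : ‖v‖ < 2 * ε / (3 * L) := hv
        rw [pow_two]
        rw [lt_div_iff₀ (by positivity : (0:ℝ) < 3 * L)] at this
        nlinarith
    calc ‖f (a + v) - f a - (InnerProductSpace.toDual ℝ E (L • (a - p a))) v‖
        = |f b - f a - L * ⟪a - p a, v⟫| := by
          rw [hb]
          congr 1
          rw [InnerProductSpace.toDual_apply_apply, real_inner_smul_left]
      _ ≤ 3 * L / 2 * ‖v‖ ^ 2 := habs
      _ ≤ ε * ‖v‖ := hfinal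
  have hdiff : Differentiable ℝ f := fun a => (hgrad a).differentiableAt
  have hgf : ∀ a : E, gradient f a = L • (a - p a) := fun a => (hgrad a).gradient
  -- Lipschitz gradient
  have hlipf : ∀ u v : E, ‖gradient f u - gradient f v‖ ≤ L * ‖u - v‖ := by
    intro u v
    rw [hgf, hgf, ← smul_sub, norm_smul, Real.norm_eq_abs, abs_of_pos hL]
    exact mul_le_mul_of_nonneg_left (hnonexp u v) hL.le
  -- convexity
  have hcvx : ConvexOn ℝ Set.univ f := by
    refine ⟨convex_univ, fun a _ b _ s t hs ht hst => ?_⟩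
    have h1 : f (s • a + t • b) ≤ φ (s • a + t • b) (s • p a + t • p b) := by
      simp only [hf_def]; exact hp _ _
    have h2 : h (s • p a + t • p b) ≤ s * h (p a) + t * h (p b) := hh_cvx _ _ _ _ hs ht hst
    have h3 : (s • a + t • b) - (s • p a + t • p b) = s • (a - p a) + t • (b - p b) := by
      rw [smul_sub, smul_sub]; abel
    have h4 : ‖s • (a - p a) + t • (b - p b)‖ ^ 2
        ≤ s * ‖a - p a‖ ^ 2 + t * ‖b - p b‖ ^ 2 := by
      have hn : ‖s • (a - p a) + t • (b - p b)‖ ≤ s * ‖a - p a‖ + t * ‖b - p b‖ := by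
        calc ‖s • (a - p a) + t • (b - p b)‖
            ≤ ‖s • (a - p a)‖ + ‖t • (b - p b)‖ := norm_add_le _ _
          _ = s * ‖a - p a‖ + t * ‖b - p b‖ := by
              rw [norm_smul, norm_smul, Real.norm_eq_abs, Real.norm_eq_abs,
                abs_of_nonneg hs, abs_of_nonneg ht]
      nlinarith [norm_nonneg (s • (a - p a) + t • (b - p b)), norm_nonneg (a - p a),
        norm_nonneg (b - p b), sq_nonneg (‖a - p a‖ - ‖b - p b‖), mul_nonneg hs ht]
    simp only [hφ_def, hf_def] at h1 ⊢
    rw [h3] at h1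
    have := mul_le_mul_of_nonneg_left h4 (by positivity : (0:ℝ) ≤ L / 2)
    simp only [smul_eq_mul]
    nlinarith [h1, h2]
  -- values
  have hhy : ∀ k, h (y k) = c k := by
    intro k
    apply le_antisymm
    · apply hh_le
      intro j
      have hkey := hij k j
      have hid : c j + ⟪g j, y k - y j⟫ - c k
          = fv j - fv k + ⟪g j, x k - x j⟫ + 1 / (2 * L) * ‖g k - g j‖ ^ 2 := by
        simp only [hc_def, hy_def]
        have e1 : x k - L⁻¹ • g k - (x j - L⁻¹ • g j) = (x k - x j) + L⁻¹ • (g j - g k) := by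
          rw [smul_sub]; abel
        have e2 : ‖g k - g j‖ ^ 2 = ‖g k‖ ^ 2 - 2 * ⟪g k, g j⟫ + ‖g j‖ ^ 2 :=
          norm_sub_sq_real _ _
        rw [e1, e2]
        simp only [inner_add_right, inner_sub_right, real_inner_smul_right,
          real_inner_self_eq_norm_sq]
        rw [real_inner_comm (g j) (g k)]
        field_simp
        ring
      linarith [hid, hkey]
    · have := hh_ge k (y k)
      simpa using this
  have hlowk : ∀ (k : ι) (w : E), fv k + L / 2 * ‖w - y k‖ ^ 2 ≤ φ (x k) w := by
    intro k w
    have h1 := hh_ge k w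
    have h2 : x k - w = (y k - w) + L⁻¹ • g k := by
      simp only [hy_def]; abel
    have h3 : ‖x k - w‖ ^ 2 = ‖y k - w‖ ^ 2 + 2 * (L⁻¹ * ⟪y k - w, g k⟫)
        + L⁻¹ ^ 2 * ‖g k‖ ^ 2 := by
      rw [h2, norm_add_sq_real, real_inner_smul_right, norm_smul, Real.norm_eq_abs,
        abs_of_nonneg (by positivity : (0:ℝ) ≤ L⁻¹), mul_pow]
    have h4 : ⟪g k, w - y k⟫ = -⟪y k - w, g k⟫ := by
      rw [real_inner_comm]
      rw [show (w - y k) = -(y k - w) by abel]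
      rw [inner_neg_left]
    have h5sq : ‖y k - w‖ ^ 2 = ‖w - y k‖ ^ 2 := by
      rw [show (y k - w) = -(w - y k) by abel, norm_neg]
    have heq : c k + ⟪g k, w - y k⟫ + L / 2 * ‖x k - w‖ ^ 2
        = fv k + L / 2 * ‖w - y k‖ ^ 2 := by
      rw [hc_def, h3, h4, h5sq]
      field_simp
      ring
    simp only [hφ_def]
    linarith [h1, heq]
  have hfxk : ∀ k, f (x k) = fv k := by
    intro k
    apply le_antisymm
    · have h1 : f (x k) ≤ φ (x k) (y k) := by simp only [hf_def]; exact hp _ _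
      have h2 : φ (x k) (y k) = fv k := by
        simp only [hφ_def]
        rw [hhy k]
        have : x k - y k = L⁻¹ • g k := by simp only [hy_def]; abel
        rw [this, norm_smul, Real.norm_eq_abs, abs_of_nonneg (by positivity : (0:ℝ) ≤ L⁻¹),
          mul_pow]
        simp only [hc_def]
        field_simp
        ring
      linarith
    · have := hlowk k (p (x k))
      have hn : 0 ≤ L / 2 * ‖p (x k) - y k‖ ^ 2 := by positivity
      simp only [hf_def] at *
      linarith
  have hpxk : ∀ k, p (x k) = y k := by
    intro k
    have h1 := hlowk k (p (x k))
    have h2 : φ (x k) (p (x k)) = fv k := by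
      have := hfxk k; simp only [hf_def] at this; exact this
    have h3 : ‖p (x k) - y k‖ ^ 2 ≤ 0 := by nlinarith [h1, h2]
    have h4 : ‖p (x k) - y k‖ = 0 := by nlinarith [norm_nonneg (p (x k) - y k), sq_nonneg ‖p (x k) - y k‖]
    rw [norm_eq_zero, sub_eq_zero] at h4
    exact h4
  have hgxk : ∀ k, gradient f (x k) = g k := by
    intro k
    rw [hgf, hpxk]
    have : x k - y k = L⁻¹ • g k := by simp only [hy_def]; abel
    rw [this, smul_smul, mul_inv_cancel₀ hL.ne', one_smul]
  exact ⟨f, hcvx, hdiff, hlipf, hfxk, hgxk⟩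

end Backward


open RealInnerProductSpace in
/-- **Interpolation conditions for `L`-smooth convex functions.**
A finite family of triples `(x k, g k, fv k)` is interpolable by an `L`-smooth convex
function (convex, differentiable, with `L`-Lipschitz gradient) if and only if the
quadratic interpolation inequalities hold for every pair of indices. -/
theorem smooth_convex_interpolation
    (d : ℕ) (hd : 1 ≤ d) (L : ℝ) (hL : 0 < L)
    (ι : Type*) [Fintype ι]
    (x g : ι → EuclideanSpace ℝ (Fin d)) (fv : ι → ℝ) :
    (∃ f : EuclideanSpace ℝ (Fin d) → ℝ,
        ConvexOn ℝ Set.univ f ∧ Differentiable ℝ f ∧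
        (∀ u v : EuclideanSpace ℝ (Fin d), ‖gradient f u - gradient f v‖ ≤ L * ‖u - v‖) ∧
        (∀ k, f (x k) = fv k) ∧ (∀ k, gradient f (x k) = g k)) ↔
      ∀ i j : ι,
        fv j - fv i + ⟪g j, x i - x j⟫ + (1 / (2 * L)) * ‖g i - g j‖ ^ 2 ≤ 0 := by
  constructor
  · rintro ⟨f, hc, hdf, hlip, hfx, hgx⟩ i j
    have := scia_forward hL hc hdf hlip (x j) (x i)
    rw [hfx j, hfx i, hgx j, hgx i] at this
    exact this
  · intro hij
    by_cases hne : Nonempty ι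
    · exact scia_backward hL x g fv hij
    · have hgrad0 : ∀ u : EuclideanSpace ℝ (Fin d),
          gradient (fun _ : EuclideanSpace ℝ (Fin d) => (0:ℝ)) u = 0 := by
        intro u
        have hg : HasGradientAt (fun _ : EuclideanSpace ℝ (Fin d) => (0:ℝ)) 0 u := by
          rw [hasGradientAt_iff_hasFDerivAt]
          simpa using hasFDerivAt_const (0:ℝ) u
        exact hg.gradient
      refine ⟨fun _ => 0, convexOn_const 0 convex_univ, differentiable_const 0, ?_, ?_, ?_⟩
      · intro u v
        rw [hgrad0 u, hgrad0 v]
        simp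
        positivity
      · intro k; exact absurd ⟨k⟩ hne
      · intro k; exact absurd ⟨k⟩ hne
end

section
/- For any real matrices A, B ∈ ℝ^{d×n} one has ‖AᵀA − BᵀB‖_F ≤ ‖A + B‖_op · ‖A − B‖_F, where ‖·‖_op is the operator norm induced by the Euclidean norm and ‖·‖_F is the Frobenius norm. -/
open Matrix

/-- Frobenius norm of a real matrix. -/
noncomputable def frobNorm {d n : ℕ} (A : Matrix (Fin d) (Fin n) ℝ) : ℝ :=
  Real.sqrt (∑ r, ∑ c, (A r c) ^ 2)

/-- Euclidean norm of a vector in `ℝ^k`. -/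
noncomputable def eucNorm {k : ℕ} (v : Fin k → ℝ) : ℝ :=
  Real.sqrt (∑ i, (v i) ^ 2)

/-- Operator norm induced by the Euclidean norms: `‖M‖_op = sup_{‖v‖ ≤ 1} ‖M v‖`. -/
noncomputable def opNorm {d n : ℕ} (M : Matrix (Fin d) (Fin n) ℝ) : ℝ :=
  sSup {c : ℝ | ∃ v : Fin n → ℝ, eucNorm v ≤ 1 ∧ c = eucNorm (M.mulVec v)}

open scoped Matrix.Norms.L2Operator

lemma eucNorm_eq {k : ℕ} (v : Fin k → ℝ) :
    eucNorm v = ‖(WithLp.equiv 2 (Fin k → ℝ)).symm v‖ := by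
  rw [eucNorm, EuclideanSpace.norm_eq]
  congr 1
  refine Finset.sum_congr rfl fun i _ => ?_
  rw [Real.norm_eq_abs, sq_abs]
  rfl

lemma frobNorm_eq {d n : ℕ} (A : Matrix (Fin d) (Fin n) ℝ) :
    frobNorm A = ‖(WithLp.equiv 2 (Fin d × Fin n → ℝ)).symm (fun p => A p.1 p.2)‖ := by
  rw [frobNorm, EuclideanSpace.norm_eq, Fintype.sum_prod_type]
  congr 1
  refine Finset.sum_congr rfl fun r _ => Finset.sum_congr rfl fun c _ => ?_
  rw [Real.norm_eq_abs, sq_abs]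
  rfl

lemma frobNorm_nonneg {d n : ℕ} (A : Matrix (Fin d) (Fin n) ℝ) : 0 ≤ frobNorm A :=
  Real.sqrt_nonneg _

lemma frobNorm_add_le {d n : ℕ} (A B : Matrix (Fin d) (Fin n) ℝ) :
    frobNorm (A + B) ≤ frobNorm A + frobNorm B := by
  rw [frobNorm_eq, frobNorm_eq, frobNorm_eq]
  have : ((WithLp.equiv 2 (Fin d × Fin n → ℝ)).symm fun p => (A + B) p.1 p.2)
      = (WithLp.equiv 2 (Fin d × Fin n → ℝ)).symm (fun p => A p.1 p.2)
        + (WithLp.equiv 2 (Fin d × Fin n → ℝ)).symm (fun p => B p.1 p.2) := rfl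
  rw [this]
  exact norm_add_le _ _

lemma frobNorm_smul {d n : ℕ} (c : ℝ) (A : Matrix (Fin d) (Fin n) ℝ) :
    frobNorm (c • A) = |c| * frobNorm A := by
  rw [frobNorm_eq, frobNorm_eq]
  have : ((WithLp.equiv 2 (Fin d × Fin n → ℝ)).symm fun p => (c • A) p.1 p.2)
      = c • (WithLp.equiv 2 (Fin d × Fin n → ℝ)).symm (fun p => A p.1 p.2) := rfl
  rw [this, norm_smul, Real.norm_eq_abs]

lemma frobNorm_transpose {d n : ℕ} (A : Matrix (Fin d) (Fin n) ℝ) :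
    frobNorm Aᵀ = frobNorm A := by
  rw [frobNorm, frobNorm]
  congr 1
  exact Finset.sum_comm

lemma eucNorm_mulVec_le {a b : ℕ} (M : Matrix (Fin a) (Fin b) ℝ) (v : Fin b → ℝ) :
    eucNorm (M.mulVec v) ≤ ‖M‖ * eucNorm v := by
  rw [eucNorm_eq, eucNorm_eq]
  exact M.l2_opNorm_mulVec ((WithLp.equiv 2 (Fin b → ℝ)).symm v)

lemma frobNorm_mul_le {a b c : ℕ} (M : Matrix (Fin a) (Fin b) ℝ)
    (C : Matrix (Fin b) (Fin c) ℝ) : frobNorm (M * C) ≤ ‖M‖ * frobNorm C := by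
  have hM : (0:ℝ) ≤ ‖M‖ := norm_nonneg _
  have key : ∀ j, ∑ i, ((M * C) i j) ^ 2 ≤ ‖M‖ ^ 2 * ∑ k, (C k j) ^ 2 := by
    intro j
    have h := eucNorm_mulVec_le M (fun k => C k j)
    have h1 : eucNorm (M.mulVec fun k => C k j) ^ 2
        ≤ (‖M‖ * eucNorm fun k => C k j) ^ 2 :=
      pow_le_pow_left₀ (Real.sqrt_nonneg _) h 2
    have h2 : eucNorm (M.mulVec fun k => C k j) ^ 2
        = ∑ i, (M.mulVec (fun k => C k j) i) ^ 2 := by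
      rw [eucNorm, Real.sq_sqrt]
      positivity
    have h3 : (eucNorm fun k => C k j) ^ 2 = ∑ k, (C k j) ^ 2 := by
      rw [eucNorm, Real.sq_sqrt]
      positivity
    have h4 : ∀ i, (M * C) i j = M.mulVec (fun k => C k j) i := by
      intro i; rfl
    calc ∑ i, ((M * C) i j) ^ 2 = ∑ i, (M.mulVec (fun k => C k j) i) ^ 2 := by
          refine Finset.sum_congr rfl fun i _ => by rw [h4]
      _ ≤ (‖M‖ * eucNorm fun k => C k j) ^ 2 := by rw [← h2]; exact h1
      _ = ‖M‖ ^ 2 * ∑ k, (C k j) ^ 2 := by rw [mul_pow, h3]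
  rw [frobNorm, frobNorm]
  have swap1 : ∑ r, ∑ j, ((M * C) r j) ^ 2 = ∑ j, ∑ r, ((M * C) r j) ^ 2 :=
    Finset.sum_comm
  rw [swap1]
  calc Real.sqrt (∑ j, ∑ r, ((M * C) r j) ^ 2)
      ≤ Real.sqrt (∑ j, ‖M‖ ^ 2 * ∑ k, (C k j) ^ 2) := by
        apply Real.sqrt_le_sqrt
        exact Finset.sum_le_sum fun j _ => key j
    _ = Real.sqrt (‖M‖ ^ 2 * ∑ j, ∑ k, (C k j) ^ 2) := by rw [← Finset.mul_sum]
    _ = ‖M‖ * Real.sqrt (∑ j, ∑ k, (C k j) ^ 2) := by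
        rw [Real.sqrt_mul (by positivity), Real.sqrt_sq hM]
    _ = ‖M‖ * Real.sqrt (∑ k, ∑ j, (C k j) ^ 2) := by rw [Finset.sum_comm]

lemma opNorm_eq_l2 {d n : ℕ} (M : Matrix (Fin d) (Fin n) ℝ) : opNorm M = ‖M‖ := by
  rw [M.l2_opNorm_def,
    ← ContinuousLinearMap.sSup_unitClosedBall_eq_norm]
  unfold opNorm
  congr 1
  ext c
  constructor
  · rintro ⟨v, hv, rfl⟩
    refine ⟨(WithLp.equiv 2 (Fin n → ℝ)).symm v, Metric.mem_closedBall.2 ?_, ?_⟩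
    · rw [dist_zero_right, ← eucNorm_eq]; exact hv
    · rw [eucNorm_eq]; rfl
  · rintro ⟨x, hx, rfl⟩
    refine ⟨WithLp.equiv 2 (Fin n → ℝ) x, ?_, ?_⟩
    · rw [eucNorm_eq]
      exact mem_closedBall_zero_iff.1 hx
    · rw [eucNorm_eq]; rfl

lemma conjT_eq_transpose {d n : ℕ} (M : Matrix (Fin d) (Fin n) ℝ) : Mᴴ = Mᵀ := by
  ext i j; simp [conjTranspose_apply]

/-- **Gram matrix perturbation bound**: `‖AᵀA − BᵀB‖_F ≤ ‖A + B‖_op ‖A − B‖_F`. -/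
theorem gram_diff_frobenius_bound {d n : ℕ} (A B : Matrix (Fin d) (Fin n) ℝ) :
    frobNorm (Aᵀ * A - Bᵀ * B) ≤ opNorm (A + B) * frobNorm (A - B) := by
  set S := A + B with hS
  set C := A - B with hC
  set G := Aᵀ * A - Bᵀ * B with hG
  have key : (2 : ℝ) • G = Sᵀ * C + Cᵀ * S := by
    rw [hG, hS, hC]
    rw [transpose_add, transpose_sub, Matrix.add_mul, Matrix.sub_mul, Matrix.mul_add,
      Matrix.mul_sub, Matrix.mul_add, Matrix.mul_sub, two_smul]
    abel
  have h1 : frobNorm (Cᵀ * S) = frobNorm (Sᵀ * C) := by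
    rw [← frobNorm_transpose (Cᵀ * S), transpose_mul, transpose_transpose]
  have h2 : frobNorm (Sᵀ * C) ≤ ‖S‖ * frobNorm C := by
    have := frobNorm_mul_le Sᵀ C
    rwa [← conjT_eq_transpose, S.l2_opNorm_conjTranspose] at this
  have h3 : frobNorm ((2:ℝ) • G) = 2 * frobNorm G := by
    rw [frobNorm_smul]; norm_num
  have h4 : frobNorm ((2:ℝ) • G) ≤ 2 * (‖S‖ * frobNorm C) := by
    rw [key]
    calc frobNorm (Sᵀ * C + Cᵀ * S) ≤ frobNorm (Sᵀ * C) + frobNorm (Cᵀ * S) :=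
          frobNorm_add_le _ _
      _ = 2 * frobNorm (Sᵀ * C) := by rw [h1]; ring
      _ ≤ 2 * (‖S‖ * frobNorm C) := by linarith [h2]
  rw [opNorm_eq_l2]
  rw [h3] at h4
  linarith
end

section
/- Fix integers K ≥ 0, N ≥ 1, J ≥ 1, a finite index set M, data A_m ∈ S^{K+2}, b_m ∈ ℝ^{K+1} (m ∈ M), A₀ ∈ S^{K+2}, b₀ ∈ ℝ^{K+1}, c₀ ∈ ℝ, objective data A_obj^j ∈ S^{K+2}, b_obj^j ∈ ℝ^{K+1}, c_obj^j ∈ ℝ (j = 1, …, J), samples (Ĝ_i, F̂_i) ∈ S^{K+2} × ℝ^{K+1} (i = 1, …, N), and ε ≥ 0. Suppose we are given a primal-feasible point with weights α_i^j and pairs (G_i^j, F_i^j), and a dual-feasible point with data (s, t, λ, τ_i^j, y_i^j, X_i^j, Y_i^j). Then Σ_{i=1}^N Σ_{j=1}^J α_i^j ⟨(A_obj^j, b_obj^j), (G_i^j, F_i^j)⟩ ≤ (1/N) Σ_{i=1}^N s_i (weak duality between the maximization and minimization forms of the DRO-PEP problem). -/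
open Matrix

/-- Inner product `⟨(X,Y),(G,F)⟩ = tr(X G) + Yᵀ F` on pairs of a symmetric matrix and a
vector. -/
noncomputable def pairIP {K : ℕ}
    (X : Matrix (Fin (K + 2)) (Fin (K + 2)) ℝ) (Y : Fin (K + 1) → ℝ)
    (G : Matrix (Fin (K + 2)) (Fin (K + 2)) ℝ) (F : Fin (K + 1) → ℝ) : ℝ :=
  (X * G).trace + ∑ k, Y k * F k

/-- Norm `‖(G,F)‖ = sqrt(‖G‖_F² + ‖F‖²)` on pairs. -/
noncomputable def pairNorm {K : ℕ}
    (G : Matrix (Fin (K + 2)) (Fin (K + 2)) ℝ) (F : Fin (K + 1) → ℝ) : ℝ :=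
  Real.sqrt ((∑ r, ∑ c, (G r c) ^ 2) + ∑ k, (F k) ^ 2)

lemma trace_eq_sum (n : ℕ) (X G : Matrix (Fin n) (Fin n) ℝ) :
    (X * G).trace = ∑ r, ∑ c, X r c * G c r := by
  simp [Matrix.trace, Matrix.mul_apply, Matrix.diag]

lemma psd_trace_nonneg (n : ℕ) (P G : Matrix (Fin n) (Fin n) ℝ)
    (hP : P.PosSemidef) (hG : G.PosSemidef) : 0 ≤ (P * G).trace := by
  open scoped MatrixOrder Matrix.Norms.L2Operator in
  obtain ⟨B, rfl⟩ := CStarAlgebra.nonneg_iff_eq_star_mul_self.mp hP.nonneg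
  open scoped MatrixOrder Matrix.Norms.L2Operator in
  obtain ⟨C, rfl⟩ := CStarAlgebra.nonneg_iff_eq_star_mul_self.mp hG.nonneg
  simp only [star_eq_conjTranspose]
  have h : (Bᴴ * B * (Cᴴ * C)).trace = ((B * Cᴴ)ᴴ * (B * Cᴴ)).trace := by
    rw [conjTranspose_mul, conjTranspose_conjTranspose, ← Matrix.mul_assoc,
      Matrix.trace_mul_comm (Bᴴ * B * Cᴴ) C]
    simp [Matrix.mul_assoc]
  rw [h, trace_eq_sum]
  apply Finset.sum_nonneg; intro r _
  apply Finset.sum_nonneg; intro c _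
  simp only [conjTranspose_apply, star_trivial]
  exact mul_self_nonneg _

lemma pairIP_abs_le {K : ℕ}
    (X : Matrix (Fin (K + 2)) (Fin (K + 2)) ℝ) (Y : Fin (K + 1) → ℝ)
    (G : Matrix (Fin (K + 2)) (Fin (K + 2)) ℝ) (F : Fin (K + 1) → ℝ) :
    |pairIP X Y G F| ≤ pairNorm X Y * pairNorm G F := by
  classical
  set ι := (Fin (K + 2) × Fin (K + 2)) ⊕ Fin (K + 1)
  set f : ι → ℝ := Sum.elim (fun p => X p.1 p.2) Y with hf
  set g : ι → ℝ := Sum.elim (fun p => G p.2 p.1) F with hg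
  have hIP : pairIP X Y G F = ∑ z : ι, f z * g z := by
    rw [Fintype.sum_sum_type]
    simp [pairIP, trace_eq_sum, f, g, Fintype.sum_prod_type]
  have hX : (∑ r, ∑ c, (X r c) ^ 2) + ∑ k, (Y k) ^ 2 = ∑ z : ι, (f z) ^ 2 := by
    rw [Fintype.sum_sum_type]
    simp [f, Fintype.sum_prod_type]
  have hG : (∑ r, ∑ c, (G r c) ^ 2) + ∑ k, (F k) ^ 2 = ∑ z : ι, (g z) ^ 2 := by
    rw [Fintype.sum_sum_type]
    simp [g, Fintype.sum_prod_type]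
    rw [Finset.sum_comm]
  have hcs := Finset.sum_mul_sq_le_sq_mul_sq Finset.univ f g
  rw [hIP, pairNorm, pairNorm, hX, hG, ← Real.sqrt_mul (by positivity)]
  rw [← Real.sqrt_sq_eq_abs]
  exact Real.sqrt_le_sqrt hcs

lemma pairIP_split {K : ℕ}
    (X : Matrix (Fin (K + 2)) (Fin (K + 2)) ℝ) (Y : Fin (K + 1) → ℝ)
    (G Gh : Matrix (Fin (K + 2)) (Fin (K + 2)) ℝ) (F Fh : Fin (K + 1) → ℝ) :
    pairIP X Y G F = pairIP X Y Gh Fh + pairIP X Y (G - Gh) (F - Fh) := by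
  simp only [pairIP, Matrix.mul_sub, trace_sub, Pi.sub_apply, mul_sub,
    Finset.sum_sub_distrib]
  ring

lemma pairIP_decomp {K : ℕ} {M : Type*} [Fintype M]
    (y : M → ℝ) (A : M → Matrix (Fin (K + 2)) (Fin (K + 2)) ℝ) (b : M → Fin (K + 1) → ℝ)
    (X : Matrix (Fin (K + 2)) (Fin (K + 2)) ℝ) (Y : Fin (K + 1) → ℝ) (τ : ℝ)
    (A₀ : Matrix (Fin (K + 2)) (Fin (K + 2)) ℝ) (b₀ : Fin (K + 1) → ℝ)
    (Aobj : Matrix (Fin (K + 2)) (Fin (K + 2)) ℝ) (bobj : Fin (K + 1) → ℝ)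
    (G : Matrix (Fin (K + 2)) (Fin (K + 2)) ℝ) (F : Fin (K + 1) → ℝ)
    (hb : ∑ m, y m • b m - Y + τ • b₀ - bobj = 0) :
    pairIP Aobj bobj G F =
      (∑ m, y m * pairIP (A m) (b m) G F) - pairIP X Y G F + τ * pairIP A₀ b₀ G F
        - ((∑ m, y m • A m - X + τ • A₀ - Aobj) * G).trace := by
  have hbobj : bobj = ∑ m, y m • b m - Y + τ • b₀ := by
    exact (sub_eq_zero.mp hb).symm
  subst hbobj
  simp only [pairIP, Matrix.sub_mul, Matrix.add_mul, Matrix.sum_mul, Matrix.smul_mul,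
    trace_sub, trace_add, trace_sum, trace_smul, smul_eq_mul, Pi.sub_apply, Pi.add_apply,
    Finset.sum_apply, Pi.smul_apply, sub_mul, add_mul, Finset.sum_mul,
    Finset.sum_sub_distrib, Finset.sum_add_distrib, Finset.mul_sum]
  rw [Finset.sum_comm]
  simp only [mul_add, Finset.mul_sum, Finset.sum_add_distrib, mul_assoc]
  ring

/-- **Weak duality for the DRO-PEP problem**: the objective value of any primal-feasible
point is at most the objective value of any dual-feasible point. -/
theorem dro_pep_weak_duality
    (K N J : ℕ) (hN : 1 ≤ N) (hJ : 1 ≤ J)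
    (M : Type*) [Fintype M]
    (A : M → Matrix (Fin (K + 2)) (Fin (K + 2)) ℝ) (b : M → Fin (K + 1) → ℝ)
    (A₀ : Matrix (Fin (K + 2)) (Fin (K + 2)) ℝ) (b₀ : Fin (K + 1) → ℝ) (c₀ : ℝ)
    (Aobj : Fin J → Matrix (Fin (K + 2)) (Fin (K + 2)) ℝ)
    (bobj : Fin J → Fin (K + 1) → ℝ) (cobj : Fin J → ℝ)
    (Ghat : Fin N → Matrix (Fin (K + 2)) (Fin (K + 2)) ℝ)
    (Fhat : Fin N → Fin (K + 1) → ℝ)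
    (ε : ℝ) (hε : 0 ≤ ε)
    -- a primal-feasible point
    (α : Fin N → Fin J → ℝ)
    (G : Fin N → Fin J → Matrix (Fin (K + 2)) (Fin (K + 2)) ℝ)
    (F : Fin N → Fin J → Fin (K + 1) → ℝ)
    (hα : ∀ i j, 0 ≤ α i j)
    (hαrow : ∀ i, ∑ j, α i j = 1 / (N : ℝ))
    (hαobj : ∑ i, ∑ j, α i j * cobj j = 0)
    (hGpsd : ∀ i j, (G i j).PosSemidef)
    (hGinterp : ∀ i j, ∀ m, pairIP (A m) (b m) (G i j) (F i j) ≤ 0)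
    (hGinit : ∀ i j, pairIP A₀ b₀ (G i j) (F i j) + c₀ ≤ 0)
    (hwass : ∑ i, ∑ j, α i j * pairNorm (G i j - Ghat i) (F i j - Fhat i) ≤ ε)
    -- a dual-feasible point
    (s : Fin N → ℝ) (t lam : ℝ) (hlam : 0 ≤ lam)
    (τ : Fin N → Fin J → ℝ) (hτ : ∀ i j, 0 ≤ τ i j)
    (y : Fin N → Fin J → M → ℝ) (hy : ∀ i j m, 0 ≤ y i j m)
    (X : Fin N → Fin J → Matrix (Fin (K + 2)) (Fin (K + 2)) ℝ)
    (hXsymm : ∀ i j, (X i j).IsSymm)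
    (Y : Fin N → Fin J → Fin (K + 1) → ℝ)
    (hd1 : ∀ i j,
      cobj j * t - c₀ * τ i j - pairIP (X i j) (Y i j) (Ghat i) (Fhat i) + lam * ε ≤ s i)
    (hd2 : ∀ i j, (∑ m, y i j m • A m - X i j + τ i j • A₀ - Aobj j).PosSemidef)
    (hd3 : ∀ i j, ∑ m, y i j m • b m - Y i j + τ i j • b₀ - bobj j = 0)
    (hd4 : ∀ i j, pairNorm (X i j) (Y i j) ≤ lam) :
    ∑ i, ∑ j, α i j * pairIP (Aobj j) (bobj j) (G i j) (F i j) ≤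
      (1 / (N : ℝ)) * ∑ i, s i := by
  
  classical
  set ν : Fin N → Fin J → ℝ :=
    fun i j => pairNorm (G i j - Ghat i) (F i j - Fhat i) with hν
  have key : ∀ i j, pairIP (Aobj j) (bobj j) (G i j) (F i j) ≤
      s i - cobj j * t - lam * ε + lam * ν i j := by
    intro i j
    have hdec := pairIP_decomp (y i j) A b (X i j) (Y i j) (τ i j) A₀ b₀ (Aobj j) (bobj j)
      (G i j) (F i j) (hd3 i j)
    have h1 : ∑ m, y i j m * pairIP (A m) (b m) (G i j) (F i j) ≤ 0 :=
      Finset.sum_nonpos fun m _ => by nlinarith [hy i j m, hGinterp i j m]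
    have h2 : τ i j * pairIP A₀ b₀ (G i j) (F i j) ≤ -(c₀ * τ i j) := by
      nlinarith [hGinit i j, hτ i j]
    have h3 : 0 ≤ ((∑ m, y i j m • A m - X i j + τ i j • A₀ - Aobj j) * G i j).trace :=
      psd_trace_nonneg _ _ _ (hd2 i j) (hGpsd i j)
    have h4 := pairIP_split (X i j) (Y i j) (G i j) (Ghat i) (F i j) (Fhat i)
    have h5 : |pairIP (X i j) (Y i j) (G i j - Ghat i) (F i j - Fhat i)| ≤ lam * ν i j := by
      calc |pairIP (X i j) (Y i j) (G i j - Ghat i) (F i j - Fhat i)|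
          ≤ pairNorm (X i j) (Y i j) * ν i j := pairIP_abs_le _ _ _ _
        _ ≤ lam * ν i j :=
            mul_le_mul_of_nonneg_right (hd4 i j) (Real.sqrt_nonneg _)
    have h6 := hd1 i j
    have h7 := abs_le.mp h5
    linarith [h7.1, h7.2]
  have hNne : (N : ℝ) ≠ 0 := Nat.cast_ne_zero.mpr (by omega)
  have hsum1 : ∑ i, ∑ j, α i j * s i = (1 / (N : ℝ)) * ∑ i, s i := by
    rw [Finset.mul_sum]
    refine Finset.sum_congr rfl fun i _ => ?_
    rw [← Finset.sum_mul, hαrow i]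
  have hsum2 : ∑ i, ∑ j, α i j * (cobj j * t) = 0 := by
    have : ∑ i, ∑ j, α i j * (cobj j * t) = (∑ i, ∑ j, α i j * cobj j) * t := by
      rw [Finset.sum_mul]
      refine Finset.sum_congr rfl fun i _ => ?_
      rw [Finset.sum_mul]
      exact Finset.sum_congr rfl fun j _ => by ring
    rw [this, hαobj, zero_mul]
  have hsum3 : ∑ i, ∑ j, α i j = 1 := by
    have : ∑ i : Fin N, ∑ j, α i j = ∑ i : Fin N, (1 / (N : ℝ)) :=
      Finset.sum_congr rfl fun i _ => hαrow i
    rw [this, Finset.sum_const, Finset.card_univ, Fintype.card_fin, nsmul_eq_mul]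
    field_simp
  have hsum4 : lam * (∑ i, ∑ j, α i j * ν i j) ≤ lam * ε :=
    mul_le_mul_of_nonneg_left hwass hlam
  calc ∑ i, ∑ j, α i j * pairIP (Aobj j) (bobj j) (G i j) (F i j)
      ≤ ∑ i, ∑ j, α i j * (s i - cobj j * t - lam * ε + lam * ν i j) := by
        refine Finset.sum_le_sum fun i _ => Finset.sum_le_sum fun j _ => ?_
        exact mul_le_mul_of_nonneg_left (key i j) (hα i j)
    _ = (∑ i, ∑ j, α i j * s i) - (∑ i, ∑ j, α i j * (cobj j * t))
          - lam * ε * (∑ i, ∑ j, α i j) + lam * (∑ i, ∑ j, α i j * ν i j) := by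
        have expand : ∀ i j, α i j * (s i - cobj j * t - lam * ε + lam * ν i j)
            = α i j * s i - α i j * (cobj j * t) - lam * ε * α i j + lam * (α i j * ν i j) :=
          fun i j => by ring
        simp only [expand, Finset.sum_sub_distrib, Finset.sum_add_distrib, Finset.mul_sum]
    _ ≤ (1 / (N : ℝ)) * ∑ i, s i := by
        rw [hsum1, hsum2, hsum3]
        linarith
end

section
/- Let S ⊆ S^{K+2} × ℝ^{K+1} be the support set F∩X, assumed nonempty and compact, define φ(G,F) = ⟨(A_obj, b_obj), (G,F)⟩, let Ẑ₁, …, Ẑ_N ∈ S, and let α ∈ (0, 1]. For ε ≥ 0 define W(ε) = sup { (1/(αN)) Σ_{i=1}^N a_i φ(Z_i) : a_i ∈ [0,1] for all i, (1/N) Σ_{i=1}^N a_i = α, Z_i ∈ S for all i, and (1/N) Σ_{i=1}^N a_i ‖Z_i − Ẑ_i‖ ≤ ε }. Then W(ε) converges, as ε → 0⁺, to the in-sample conditional value-at-risk inf_{t ∈ ℝ} ( t + (1/(αN)) Σ_{i=1}^N max(φ(Ẑ_i) − t, 0) ). -/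
open Matrix

/-- The support set `F ∩ X` of lifted representations. -/
def supportSet {K : ℕ} {M : Type*} [Fintype M]
    (A : M → Matrix (Fin (K + 2)) (Fin (K + 2)) ℝ) (b : M → Fin (K + 1) → ℝ)
    (A₀ : Matrix (Fin (K + 2)) (Fin (K + 2)) ℝ) (b₀ : Fin (K + 1) → ℝ) (c₀ : ℝ) :
    Set (Matrix (Fin (K + 2)) (Fin (K + 2)) ℝ × (Fin (K + 1) → ℝ)) :=
  {Z | Z.1.PosSemidef ∧ (∀ m, pairIP (A m) (b m) Z.1 Z.2 ≤ 0) ∧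
    pairIP A₀ b₀ Z.1 Z.2 + c₀ ≤ 0}


lemma pairNorm_nonneg {K : ℕ} (G : Matrix (Fin (K + 2)) (Fin (K + 2)) ℝ)
    (F : Fin (K + 1) → ℝ) : 0 ≤ pairNorm G F := Real.sqrt_nonneg _

lemma pairNorm_zero {K : ℕ} : pairNorm (0 : Matrix (Fin (K + 2)) (Fin (K + 2)) ℝ)
    (0 : Fin (K + 1) → ℝ) = 0 := by
  simp [pairNorm]

lemma pairIP_sub {K : ℕ} (X G G' : Matrix (Fin (K + 2)) (Fin (K + 2)) ℝ)
    (Y F F' : Fin (K + 1) → ℝ) :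
    pairIP X Y (G - G') (F - F') = pairIP X Y G F - pairIP X Y G' F' := by
  simp only [pairIP, Matrix.mul_sub, Matrix.trace_sub, Pi.sub_apply, mul_sub,
    Finset.sum_sub_distrib]
  ring

lemma pairIP_le {K : ℕ} (X G : Matrix (Fin (K + 2)) (Fin (K + 2)) ℝ)
    (Y F : Fin (K + 1) → ℝ) :
    pairIP X Y G F ≤ pairNorm X Y * pairNorm G F := by
  classical
  set ι := (Fin (K + 2) × Fin (K + 2)) ⊕ Fin (K + 1)
  have h := Real.sum_mul_le_sqrt_mul_sqrt (Finset.univ : Finset ι)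
    (Sum.elim (fun p => X p.1 p.2) Y) (Sum.elim (fun p => G p.2 p.1) F)
  have e1 : ∑ i : ι, Sum.elim (fun p => X p.1 p.2) Y i * Sum.elim (fun p => G p.2 p.1) F i
      = pairIP X Y G F := by
    rw [Fintype.sum_sum_type, Fintype.sum_prod_type]
    simp [pairIP, Matrix.trace, Matrix.diag, Matrix.mul_apply]
  have e2 : ∑ i : ι, Sum.elim (fun p => X p.1 p.2) Y i ^ 2
      = (∑ r, ∑ c, (X r c) ^ 2) + ∑ k, (Y k) ^ 2 := by
    rw [Fintype.sum_sum_type]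
    simp [Fintype.sum_prod_type]
  have e3 : ∑ i : ι, Sum.elim (fun p => G p.2 p.1) F i ^ 2
      = (∑ r, ∑ c, (G r c) ^ 2) + ∑ k, (F k) ^ 2 := by
    rw [Fintype.sum_sum_type]
    simp only [Sum.elim_inl, Sum.elim_inr]
    rw [Fintype.sum_prod_type]
    rw [Finset.sum_comm]
  rw [e1, e2, e3] at h
  exact h

lemma weighted_le {N : ℕ} (g a : Fin N → ℝ) (ha : ∀ i, a i ∈ Set.Icc (0:ℝ) 1) (t : ℝ) :
    ∑ i, a i * g i ≤ (∑ i, a i) * t + ∑ i, max (g i - t) 0 := by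
  rw [Finset.sum_mul, ← Finset.sum_add_distrib]
  apply Finset.sum_le_sum
  intro i _
  rcases le_or_gt (g i) t with h | h
  · have h0 : 0 ≤ max (g i - t) 0 := le_max_right _ _
    nlinarith [(ha i).1, (ha i).2]
  · have : max (g i - t) 0 = g i - t := max_eq_left (by linarith)
    rw [this]
    nlinarith [(ha i).1, (ha i).2]

lemma cvar_attain (N : ℕ) (hN : 1 ≤ N) (g : Fin N → ℝ) (α : ℝ)
    (hα : α ∈ Set.Ioc (0:ℝ) 1) :
    ∃ (a : Fin N → ℝ) (t : ℝ), (∀ i, a i ∈ Set.Icc (0:ℝ) 1) ∧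
      (∑ i, a i = α * N) ∧
      (∑ i, a i * g i = α * N * t + ∑ i, max (g i - t) 0) := by
  classical
  have hNpos : 0 < N := hN
  haveI : Nonempty (Fin N) := Fin.pos_iff_nonempty.mp hNpos
  obtain ⟨hα0, hα1⟩ := hα
  set T : Finset (Fin N) :=
    Finset.univ.filter (fun j => α * N ≤ (Finset.univ.filter fun i => g j ≤ g i).card) with hT
  have hTne : T.Nonempty := by
    obtain ⟨j₀, -, hj₀⟩ := Finset.exists_min_image Finset.univ g Finset.univ_nonempty
    refine ⟨j₀, ?_⟩
    simp only [hT, Finset.mem_filter, Finset.mem_univ, true_and]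
    have : (Finset.univ.filter fun i => g j₀ ≤ g i) = Finset.univ := by
      apply Finset.filter_true_of_mem
      intro i _; exact hj₀ i (Finset.mem_univ i)
    rw [this]
    simp only [Finset.card_univ, Fintype.card_fin]
    have hNR : (0:ℝ) < N := by exact_mod_cast hNpos
    nlinarith
  obtain ⟨js, hjsT, hmax⟩ := Finset.exists_max_image T g hTne
  set t := g js with ht
  set P : Finset (Fin N) := Finset.univ.filter (fun i => t < g i) with hP
  set Q : Finset (Fin N) := Finset.univ.filter (fun i => g i = t) with hQ
  have hjsQ : js ∈ Q := by simp [hQ, ht]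
  have hqpos : 0 < Q.card := Finset.card_pos.mpr ⟨js, hjsQ⟩
  -- α N ≤ p + q
  have hPQ : Finset.univ.filter (fun i => t ≤ g i) = P ∪ Q := by
    ext i
    simp only [Finset.mem_filter, Finset.mem_univ, true_and, Finset.mem_union, hP, hQ]
    constructor
    · intro h
      rcases lt_or_eq_of_le h with h' | h'
      · exact Or.inl h'
      · exact Or.inr h'.symm
    · rintro (h | h)
      · exact le_of_lt h
      · exact le_of_eq h.symm
  have hdisj : Disjoint P Q := by
    rw [Finset.disjoint_left]
    intro i hiP hiQ
    simp only [hP, Finset.mem_filter, Finset.mem_univ, true_and] at hiP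
    simp only [hQ, Finset.mem_filter, Finset.mem_univ, true_and] at hiQ
    exact absurd hiQ (ne_of_gt hiP)
  have hpq : α * N ≤ (P.card : ℝ) + Q.card := by
    have hjs : α * N ≤ ((Finset.univ.filter fun i => t ≤ g i).card : ℝ) := by
      have := hjsT
      simp only [hT, Finset.mem_filter, Finset.mem_univ, true_and] at this
      exact_mod_cast this
    rwa [hPQ, Finset.card_union_of_disjoint hdisj, Nat.cast_add] at hjs
  -- p ≤ α N
  have hple : (P.card : ℝ) ≤ α * N := by
    by_contra hcon
    push_neg at hcon
    have hPne : P.Nonempty := by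
      rw [← Finset.card_pos]
      by_contra h
      push_neg at h
      interval_cases h' : P.card
      · simp only [h', Nat.cast_zero] at hcon
        have hNR : (0:ℝ) < N := by exact_mod_cast hNpos
        nlinarith
    obtain ⟨j₁, hj₁P, hj₁min⟩ := Finset.exists_min_image P g hPne
    have hsub : P ⊆ Finset.univ.filter (fun i => g j₁ ≤ g i) := by
      intro i hi
      simp only [Finset.mem_filter, Finset.mem_univ, true_and]
      exact hj₁min i hi
    have hj₁T : j₁ ∈ T := by
      simp only [hT, Finset.mem_filter, Finset.mem_univ, true_and]
      have := Finset.card_le_card hsub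
      have : (P.card : ℝ) ≤ ((Finset.univ.filter (fun i => g j₁ ≤ g i)).card : ℝ) := by
        exact_mod_cast this
      linarith
    have h1 : g j₁ ≤ t := hmax j₁ hj₁T
    have h2 : t < g j₁ := by
      simpa only [hP, Finset.mem_filter, Finset.mem_univ, true_and] using hj₁P
    linarith
  set c : ℝ := (α * N - P.card) / Q.card with hc
  have hqne : (Q.card : ℝ) ≠ 0 := Nat.cast_ne_zero.mpr hqpos.ne'
  have hqposR : (0:ℝ) < Q.card := Nat.cast_pos.mpr hqpos
  have hc0 : 0 ≤ c := div_nonneg (by linarith) (le_of_lt hqposR)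
  have hc1 : c ≤ 1 := by
    rw [div_le_one hqposR]; linarith
  have hqc : (Q.card : ℝ) * c = α * N - P.card := by
    rw [hc, mul_div_assoc']; exact mul_div_cancel_left₀ _ hqne
  set a : Fin N → ℝ := fun i => if t < g i then 1 else if g i = t then c else 0 with haa
  have ha_eq : ∀ i, a i = (if t < g i then (1:ℝ) else 0) + (if g i = t then c else 0) := by
    intro i
    by_cases h1 : t < g i
    · have : g i ≠ t := ne_of_gt h1
      simp [haa, h1, this]
    · by_cases h2 : g i = t <;> simp [haa, h1, h2]
  have ha_mul : ∀ i, a i * g i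
      = (if t < g i then g i else 0) + (if g i = t then c * t else 0) := by
    intro i
    by_cases h1 : t < g i
    · have : g i ≠ t := ne_of_gt h1
      simp [haa, h1, this]
    · by_cases h2 : g i = t
      · simp [haa, h1, h2, mul_comm]
      · simp [haa, h1, h2]
  refine ⟨a, t, ?_, ?_, ?_⟩
  · intro i
    by_cases h1 : t < g i
    · simp [haa, h1]
    · by_cases h2 : g i = t <;> simp [haa, h1, h2, hc0, hc1]
  · have : ∑ i, a i = (P.card : ℝ) + (Q.card : ℝ) * c := by
      simp only [ha_eq]
      rw [Finset.sum_add_distrib, ← Finset.sum_filter, ← Finset.sum_filter]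
      simp [hP, hQ, mul_comm]
    rw [this]; linarith
  · have h1 : ∑ i, a i * g i = (∑ i ∈ P, g i) + (Q.card : ℝ) * (c * t) := by
      simp only [ha_mul]
      rw [Finset.sum_add_distrib, ← Finset.sum_filter, ← Finset.sum_filter]
      simp [hP, hQ, mul_comm]
    have h2 : ∑ i, max (g i - t) 0 = (∑ i ∈ P, g i) - (P.card : ℝ) * t := by
      have : ∀ i, max (g i - t) 0 = if t < g i then g i - t else 0 := by
        intro i
        by_cases h : t < g i
        · simp [h, max_eq_left (by linarith : (0:ℝ) ≤ g i - t)]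
        · have h' := not_lt.mp h
          simp [h, max_eq_right (by linarith : g i - t ≤ 0)]
      simp only [this]
      rw [← Finset.sum_filter, ← hP, Finset.sum_sub_distrib]
      simp [mul_comm]
    rw [h1, h2]
    have h3 : (Q.card : ℝ) * (c * t) = (α * N - P.card) * t := by
      rw [← mul_assoc, hqc]
    rw [h3]; ring


/-- **Small-radius limit of the DRO-PEP value (CVaR case).** As the Wasserstein radius
`ε` tends to `0⁺`, the worst-case CVaR value `W(ε)` converges to the in-sample
conditional value-at-risk of the performance metric. -/
theorem dro_pep_cvar_radius_to_zero
    (K N : ℕ) (hN : 1 ≤ N)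
    (M : Type*) [Fintype M]
    (A : M → Matrix (Fin (K + 2)) (Fin (K + 2)) ℝ) (b : M → Fin (K + 1) → ℝ)
    (A₀ : Matrix (Fin (K + 2)) (Fin (K + 2)) ℝ) (b₀ : Fin (K + 1) → ℝ) (c₀ : ℝ)
    (hne : (supportSet A b A₀ b₀ c₀).Nonempty)
    (hcomp : IsCompact (supportSet A b A₀ b₀ c₀))
    (Aobj : Matrix (Fin (K + 2)) (Fin (K + 2)) ℝ) (bobj : Fin (K + 1) → ℝ)
    (Zhat : Fin N → Matrix (Fin (K + 2)) (Fin (K + 2)) ℝ × (Fin (K + 1) → ℝ))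
    (hZhat : ∀ i, Zhat i ∈ supportSet A b A₀ b₀ c₀)
    (α : ℝ) (hα : α ∈ Set.Ioc (0 : ℝ) 1) :
    Filter.Tendsto
      (fun ε : ℝ => sSup {v : ℝ |
        ∃ (a : Fin N → ℝ)
          (Z : Fin N → Matrix (Fin (K + 2)) (Fin (K + 2)) ℝ × (Fin (K + 1) → ℝ)),
          (∀ i, a i ∈ Set.Icc (0 : ℝ) 1) ∧
          (1 / (N : ℝ)) * ∑ i, a i = α ∧
          (∀ i, Z i ∈ supportSet A b A₀ b₀ c₀) ∧
          (1 / (N : ℝ)) * ∑ i, a i * pairNorm ((Z i).1 - (Zhat i).1) ((Z i).2 - (Zhat i).2)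
            ≤ ε ∧
          v = (1 / (α * N)) * ∑ i, a i * pairIP Aobj bobj (Z i).1 (Z i).2})
      (nhdsWithin 0 (Set.Ioi 0))
      (nhds (sInf {v : ℝ | ∃ t : ℝ,
        v = t + (1 / (α * N)) * ∑ i, max (pairIP Aobj bobj (Zhat i).1 (Zhat i).2 - t) 0})) := by
  classical
  obtain ⟨hα0, hα1⟩ := hα
  have hNR : (0:ℝ) < N := by exact_mod_cast hN
  have hαN : (0:ℝ) < α * N := mul_pos hα0 hNR
  set g : Fin N → ℝ := fun i => pairIP Aobj bobj (Zhat i).1 (Zhat i).2 with hg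
  obtain ⟨as, ts, has, hsum, heq⟩ := cvar_attain N hN g α ⟨hα0, hα1⟩
  set V : ℝ := (1 / (α * N)) * ∑ i, as i * g i with hV
  have hVform : V = ts + (1 / (α * N)) * ∑ i, max (g i - ts) 0 := by
    rw [hV, heq]
    field_simp
  set L : ℝ := pairNorm Aobj bobj with hL
  have hL0 : 0 ≤ L := pairNorm_nonneg _ _
  set C : ℝ := L / α with hC
  have hC0 : 0 ≤ C := div_nonneg hL0 (le_of_lt hα0)
  set S : ℝ → Set ℝ := fun ε => {v : ℝ |
        ∃ (a : Fin N → ℝ)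
          (Z : Fin N → Matrix (Fin (K + 2)) (Fin (K + 2)) ℝ × (Fin (K + 1) → ℝ)),
          (∀ i, a i ∈ Set.Icc (0 : ℝ) 1) ∧
          (1 / (N : ℝ)) * ∑ i, a i = α ∧
          (∀ i, Z i ∈ supportSet A b A₀ b₀ c₀) ∧
          (1 / (N : ℝ)) * ∑ i, a i * pairNorm ((Z i).1 - (Zhat i).1) ((Z i).2 - (Zhat i).2)
            ≤ ε ∧
          v = (1 / (α * N)) * ∑ i, a i * pairIP Aobj bobj (Z i).1 (Z i).2} with hS
  set I : Set ℝ := {v : ℝ | ∃ t : ℝ,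
        v = t + (1 / (α * N)) * ∑ i, max (g i - t) 0} with hI
  -- every element of I is ≥ V
  have hIlower : ∀ v ∈ I, V ≤ v := by
    rintro v ⟨t, rfl⟩
    have h1 : ∑ i, as i * g i ≤ α * N * t + ∑ i, max (g i - t) 0 := by
      have := weighted_le g as has t
      rwa [hsum] at this
    have h2 := mul_le_mul_of_nonneg_left h1 (le_of_lt (by positivity : (0:ℝ) < 1/(α*N)))
    have h3 : (1/(α*N)) * (α*N*t + ∑ i, max (g i - t) 0)
        = t + (1/(α*N)) * ∑ i, max (g i - t) 0 := by field_simp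
    rw [h3] at h2
    rw [hV]
    exact h2
  have hVI : V ∈ I := ⟨ts, hVform⟩
  have hInf : sInf I = V :=
    le_antisymm (csInf_le ⟨V, hIlower⟩ hVI) (le_csInf ⟨V, hVI⟩ hIlower)
  -- membership of V in S ε for ε > 0
  have hmem : ∀ ε : ℝ, 0 < ε → V ∈ S ε := by
    intro ε hε
    refine ⟨as, Zhat, has, ?_, hZhat, ?_, rfl⟩
    · rw [hsum]; field_simp
    · have : ∀ i, as i * pairNorm ((Zhat i).1 - (Zhat i).1) ((Zhat i).2 - (Zhat i).2) = 0 := by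
        intro i
        rw [sub_self, sub_self, pairNorm_zero, mul_zero]
      simp only [this, Finset.sum_const_zero, mul_zero]
      exact le_of_lt hε
  -- upper bound for all elements of S ε
  have hub : ∀ ε : ℝ, 0 < ε → ∀ v ∈ S ε, v ≤ V + C * ε := by
    rintro ε hε v ⟨a, Z, ha, hasum, hZ, hdist, rfl⟩
    have hsuma : ∑ i, a i = α * N := by
      field_simp at hasum
      linarith [hasum]
    have hkey : ∀ i, a i * pairIP Aobj bobj (Z i).1 (Z i).2
        ≤ a i * g i + L * (a i * pairNorm ((Z i).1 - (Zhat i).1) ((Z i).2 - (Zhat i).2)) := by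
      intro i
      have hlip : pairIP Aobj bobj (Z i).1 (Z i).2 - g i
          ≤ L * pairNorm ((Z i).1 - (Zhat i).1) ((Z i).2 - (Zhat i).2) := by
        have := pairIP_le Aobj ((Z i).1 - (Zhat i).1) bobj ((Z i).2 - (Zhat i).2)
        rwa [pairIP_sub] at this
      have ha0 := (ha i).1
      nlinarith [mul_le_mul_of_nonneg_left hlip ha0]
    have h1 : ∑ i, a i * pairIP Aobj bobj (Z i).1 (Z i).2
        ≤ ∑ i, a i * g i + L * ∑ i, a i * pairNorm ((Z i).1 - (Zhat i).1) ((Z i).2 - (Zhat i).2) := by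
      rw [Finset.mul_sum, ← Finset.sum_add_distrib]
      exact Finset.sum_le_sum fun i _ => hkey i
    have h2 : ∑ i, a i * g i ≤ α * N * V := by
      have hw := weighted_le g a ha ts
      rw [hsuma] at hw
      have : α * N * V = α * N * ts + ∑ i, max (g i - ts) 0 := by
        rw [hVform]; field_simp
      linarith
    have h3 : ∑ i, a i * pairNorm ((Z i).1 - (Zhat i).1) ((Z i).2 - (Zhat i).2) ≤ N * ε := by
      rw [div_mul_eq_mul_div, one_mul, div_le_iff₀ hNR] at hdist
      linarith [hdist]
    have h4 : ∑ i, a i * pairIP Aobj bobj (Z i).1 (Z i).2 ≤ α * N * V + L * (N * ε) := by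
      have := mul_le_mul_of_nonneg_left h3 hL0
      linarith
    have h5 : (1 / (α * N)) * (α * N * V + L * (N * ε)) = V + C * ε := by
      rw [hC]; field_simp
    calc (1 / (α * N)) * ∑ i, a i * pairIP Aobj bobj (Z i).1 (Z i).2
        ≤ (1 / (α * N)) * (α * N * V + L * (N * ε)) :=
          mul_le_mul_of_nonneg_left h4 (by positivity)
      _ = V + C * ε := h5
  -- squeeze
  have hlow : ∀ ε ∈ Set.Ioi (0:ℝ), V ≤ sSup (S ε) := fun ε hε =>
    le_csSup ⟨V + C * ε, fun v hv => hub ε hε v hv⟩ (hmem ε hε)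
  have hupS : ∀ ε ∈ Set.Ioi (0:ℝ), sSup (S ε) ≤ V + C * ε := fun ε hε =>
    csSup_le ⟨V, hmem ε hε⟩ (fun v hv => hub ε hε v hv)
  have hgoal : Filter.Tendsto (fun ε : ℝ => sSup (S ε))
      (nhdsWithin 0 (Set.Ioi 0)) (nhds V) := by
    have htop : Filter.Tendsto (fun ε : ℝ => V + C * ε)
        (nhdsWithin 0 (Set.Ioi 0)) (nhds V) := by
      have : Filter.Tendsto (fun ε : ℝ => V + C * ε) (nhds 0) (nhds (V + C * 0)) :=
        (continuous_const.add (continuous_const.mul continuous_id)).tendsto 0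
      rw [mul_zero, add_zero] at this
      exact this.mono_left nhdsWithin_le_nhds
    refine tendsto_of_tendsto_of_tendsto_of_le_of_le' tendsto_const_nhds htop ?_ ?_
    · exact eventually_mem_nhdsWithin.mono fun ε hε => hlow ε hε
    · exact eventually_mem_nhdsWithin.mono fun ε hε => hupS ε hε
  have : sInf {v : ℝ | ∃ t : ℝ,
      v = t + (1 / (α * N)) * ∑ i, max (pairIP Aobj bobj (Zhat i).1 (Zhat i).2 - t) 0} = V := by
    rw [← hInf, hI, hg]
  rw [this]
  exact hgoal
end
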